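/- Let b : [0,∞) → (0,∞) be continuous and nondecreasing. Then for every t ≥ 0, e^{−∫₀ᵗ b(u) du} + b(t) ∫₀ᵗ e^{−∫₀^τ b(u) du} dτ ≤ b(t)/b(0). -/

import Mathlib

/-- For `b` continuous, positive and nondecreasing on `[0,∞)`:
`e^{−∫₀ᵗ b} + b(t) ∫₀ᵗ e^{−∫₀^τ b} dτ ≤ b(t)/b(0)`. -/
theorem stmt12 (b : ℝ → ℝ) (hb : Continuous b) (hpos : ∀ t, 0 ≤ t → 0 < b t)
    (hmono : MonotoneOn b (Set.Ici 0)) :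
    ∀ t, 0 ≤ t →
      Real.exp (-∫ u in (0:ℝ)..t, b u) +
        b t * ∫ τ in (0:ℝ)..t, Real.exp (-∫ u in (0:ℝ)..τ, b u) ≤
      b t / b 0 := by
  intro t ht
  set B : ℝ → ℝ := fun s => ∫ u in (0:ℝ)..s, b u with hBdef
  have hBder : ∀ s, HasDerivAt B (b s) s := fun s =>
    intervalIntegral.integral_hasDerivAt_right (hb.intervalIntegrable 0 s)
      (hb.stronglyMeasurableAtFilter _ _) hb.continuousAt
  have hBc : Continuous B := continuous_iff_continuousAt.2 fun s => (hBder s).continuousAt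
  have hcont : Continuous fun s => Real.exp (-B s) := Real.continuous_exp.comp hBc.neg
  have hFder : ∀ s, HasDerivAt (fun x => -Real.exp (-B x)) (b s * Real.exp (-B s)) s := by
    intro s
    have h1 : HasDerivAt (fun x => -B x) (-b s) s := (hBder s).neg
    have h2 := (Real.hasDerivAt_exp (-B s)).comp s h1
    have h3 : HasDerivAt (fun x => -Real.exp (-B x)) (-(Real.exp (-B s) * -b s)) s := h2.neg
    convert h3 using 1
    ring
  have hB0 : B 0 = 0 := by simp [hBdef]
  have hFTC : ∫ τ in (0:ℝ)..t, b τ * Real.exp (-B τ) = 1 - Real.exp (-B t) := by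
    rw [intervalIntegral.integral_eq_sub_of_hasDerivAt (fun s _ => hFder s)
      ((hb.mul hcont).intervalIntegrable 0 t)]
    simp [hB0]; ring
  have hmonoInt : b 0 * ∫ τ in (0:ℝ)..t, Real.exp (-B τ) ≤ 1 - Real.exp (-B t) := by
    rw [← hFTC, ← intervalIntegral.integral_const_mul]
    apply intervalIntegral.integral_mono_on ht
      ((continuous_const.mul hcont).intervalIntegrable 0 t)
      ((hb.mul hcont).intervalIntegrable 0 t)
    intro x hx
    exact mul_le_mul_of_nonneg_right
      (hmono (by simp : (0:ℝ) ∈ Set.Ici 0) (Set.mem_Icc.1 hx).1 (Set.mem_Icc.1 hx).1)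
      (Real.exp_nonneg _)
  have hb0 : 0 < b 0 := hpos 0 le_rfl
  have hbt : b 0 ≤ b t := hmono (by simp) ht ht
  have hexp : 0 < Real.exp (-B t) := Real.exp_pos _
  have hI : b t * ∫ τ in (0:ℝ)..t, Real.exp (-B τ) ≤ b t / b 0 * (1 - Real.exp (-B t)) := by
    have hInn : 0 ≤ ∫ τ in (0:ℝ)..t, Real.exp (-B τ) :=
      intervalIntegral.integral_nonneg ht fun x _ => (Real.exp_nonneg _)
    rw [div_mul_eq_mul_div, le_div_iff₀ hb0]
    calc b t * (∫ τ in (0:ℝ)..t, Real.exp (-B τ)) * b 0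
        = b t * (b 0 * ∫ τ in (0:ℝ)..t, Real.exp (-B τ)) := by ring
      _ ≤ b t * (1 - Real.exp (-B t)) :=
        mul_le_mul_of_nonneg_left hmonoInt (le_of_lt (hpos t ht))
  calc Real.exp (-B t) + b t * ∫ τ in (0:ℝ)..t, Real.exp (-B τ)
      ≤ Real.exp (-B t) + b t / b 0 * (1 - Real.exp (-B t)) := by linarith
    _ ≤ b t / b 0 := by
        have h1 : (1:ℝ) ≤ b t / b 0 := (one_le_div hb0).2 hbt
        nlinarith
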